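/- Let S be a nonempty family of increasing maps ℕ̄ → ℕ̄ (where ℕ̄ = ℕ ∪ {∞}) that is closed under pointwise addition and under composition, and let C_S be the operator-norm closure of ⋃_{s∈S} B_s in B(ℓ²(ℕ)). Then C_S is one of the following four sets: {0}, the compact operators K(ℓ²(ℕ)), C_RC, or B(ℓ²(ℕ)). -/

import Mathlib

noncomputable section

/-- The Hilbert space `ℓ²(ℕ)`. -/
abbrev l2N : Type := lp (fun _ : ℕ => ℂ) 2

/-- The extended-natural cardinality of the support of `ξ ∈ ℓ²(ℕ)`. -/
def suppCard (ξ : l2N) : ℕ∞ := (Function.support (ξ : ∀ _ : ℕ, ℂ)).encard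

/-- The set `B_s` of operators whose support expansion (and that of the adjoint)
is controlled by `s : ℕ̄ → ℕ̄`. -/
def BsetD (s : ℕ∞ → ℕ∞) : Set (l2N →L[ℂ] l2N) :=
  {a | ∀ ξ : l2N, suppCard (a ξ) ≤ s (suppCard ξ) ∧
    suppCard (ContinuousLinearMap.adjoint a ξ) ≤ s (suppCard ξ)}

/-- The matrix entry `a_{n,m} = ⟨a δ_m, δ_n⟩`, i.e. the `n`-th coordinate of `a δ_m`. -/
def entry (a : l2N →L[ℂ] l2N) (n m : ℕ) : ℂ := (a (lp.single 2 m 1)) n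

/-- `a` is uniformly row and column finite. -/
def RCFinite (a : l2N →L[ℂ] l2N) : Prop :=
  ∃ N : ℕ, ∀ m : ℕ,
    {n : ℕ | entry a n m ≠ 0}.encard ≤ (N : ℕ∞) ∧
    {n : ℕ | entry a m n ≠ 0}.encard ≤ (N : ℕ∞)

/-- `C_RC`, the operator-norm closure of the uniformly RC-finite operators. -/
def C_RC : Set (l2N →L[ℂ] l2N) := closure {a | RCFinite a}

namespace SuppExp

open scoped ComplexConjugate

/-- the standard basis vector -/
def en (m : ℕ) : l2N := lp.single 2 m 1

lemma en_apply_self (m : ℕ) : en m m = 1 := lp.single_apply_self 2 m 1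

lemma en_apply_ne {m n : ℕ} (h : n ≠ m) : en m n = 0 := lp.single_apply_ne 2 m 1 h

lemma inner_en (f : l2N) (n : ℕ) : (inner ℂ (en n) f : ℂ) = f n := by
  rw [en, lp.inner_single_left]; simp [RCLike.inner_apply]

lemma entry_eq (a : l2N →L[ℂ] l2N) (n m : ℕ) : entry a n m = (a (en m)) n := rfl

lemma support_en (m : ℕ) : Function.support (⇑(en m)) = {m} := by
  ext n
  simp only [Function.mem_support, Set.mem_singleton_iff]
  constructor
  · intro h; by_contra hn; exact h (en_apply_ne hn)
  · rintro rfl; rw [en_apply_self]; exact one_ne_zero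

lemma suppCard_en (m : ℕ) : suppCard (en m) = 1 := by
  rw [suppCard, support_en, Set.encard_singleton]

lemma suppCard_eq_zero {ξ : l2N} : suppCard ξ = 0 ↔ ξ = 0 := by
  rw [suppCard, Set.encard_eq_zero, Function.support_eq_empty_iff]
  constructor
  · intro h; apply lp.ext; exact h
  · rintro rfl; exact lp.coeFn_zero _ _

lemma one_le_suppCard {ξ : l2N} (h : ξ ≠ 0) : 1 ≤ suppCard ξ := by
  rw [ENat.one_le_iff_ne_zero]
  intro h0
  exact h (suppCard_eq_zero.mp h0)

/-- every vector is the sum of its coordinates times basis vectors -/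
lemma hasSum_apply (b : l2N →L[ℂ] l2N) (ξ : l2N) :
    HasSum (fun m => ξ m • b (en m)) (b ξ) := by
  have h1 : HasSum (fun m => lp.single 2 m (ξ m)) ξ := lp.hasSum_single (by norm_num) ξ
  have h2 : ∀ m, lp.single 2 m (ξ m) = ξ m • en m := by
    intro m
    rw [en, ← lp.single_smul]
    norm_num
  have h3 : HasSum (fun m => ξ m • en m) ξ := by
    rw [← funext h2]; exact h1
  have := h3.mapL b
  simpa using this

/-- finitely supported vectors: the map is a finite sum -/
lemma apply_eq_sum (b : l2N →L[ℂ] l2N) (ξ : l2N) (F : Finset ℕ)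
    (hF : Function.support (⇑ξ) ⊆ ↑F) :
    b ξ = ∑ m ∈ F, ξ m • b (en m) := by
  refine (hasSum_sum_of_ne_finset_zero ?_).unique (hasSum_apply b ξ) |>.symm
  intro m hm
  have : ξ m = 0 := by
    by_contra h
    exact hm (hF h)
  rw [this, zero_smul]

lemma support_apply_subset (b : l2N →L[ℂ] l2N) (ξ : l2N) (F : Finset ℕ)
    (hF : Function.support (⇑ξ) ⊆ ↑F) :
    Function.support (⇑(b ξ)) ⊆ ⋃ m ∈ F, Function.support (⇑(b (en m))) := by
  intro n hn
  rw [Function.mem_support] at hn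
  rw [apply_eq_sum b ξ F hF] at hn
  rw [lp.coeFn_sum, Finset.sum_apply] at hn
  obtain ⟨m, hm, hne⟩ := Finset.exists_ne_zero_of_sum_ne_zero hn
  refine Set.mem_biUnion hm ?_
  rw [Function.mem_support]
  intro h0
  apply hne
  rw [lp.coeFn_smul, Pi.smul_apply, h0, smul_zero]

lemma encard_biUnion_le (F : Finset ℕ) (A : ℕ → Set ℕ) :
    (⋃ m ∈ F, A m).encard ≤ ∑ m ∈ F, (A m).encard := by
  classical
  induction F using Finset.induction_on with
  | empty => simp
  | insert a G hx ih =>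
    rw [Finset.set_biUnion_insert, Finset.sum_insert hx]
    exact (Set.encard_union_le _ _).trans (add_le_add le_rfl ih)

/-- column bound gives global multiplicative bound -/
lemma suppCard_apply_le (b : l2N →L[ℂ] l2N) (N : ℕ∞)
    (hcol : ∀ m, suppCard (b (en m)) ≤ N) (ξ : l2N) :
    suppCard (b ξ) ≤ N * suppCard ξ := by
  by_cases hfin : (Function.support (⇑ξ)).Finite
  · set F := hfin.toFinset with hFdef
    have hF : Function.support (⇑ξ) ⊆ ↑F := by simp [hFdef]
    calc suppCard (b ξ) ≤ (⋃ m ∈ F, Function.support (⇑(b (en m)))).encard :=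
          Set.encard_mono (support_apply_subset b ξ F hF)
      _ ≤ ∑ m ∈ F, (Function.support (⇑(b (en m)))).encard := encard_biUnion_le _ _
      _ ≤ ∑ _m ∈ F, N := Finset.sum_le_sum (fun m _ => hcol m)
      _ = F.card • N := by rw [Finset.sum_const]
      _ = N * F.card := by
          rw [nsmul_eq_mul, mul_comm]
      _ = N * suppCard ξ := by
          rw [suppCard, hfin.encard_eq_coe_toFinset_card]
  · by_cases hN : N = 0
    · have hb0 : ∀ m, b (en m) = 0 := by
        intro m
        have := hcol m
        rw [hN] at this
        rw [← suppCard_eq_zero]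
        exact le_antisymm this zero_le
      have : b ξ = 0 := by
        have h0 : HasSum (fun m : ℕ => ξ m • b (en m)) 0 := by
          have : (fun m : ℕ => ξ m • b (en m)) = fun _ => (0 : l2N) := by
            funext m; rw [hb0 m, smul_zero]
          rw [this]; exact hasSum_zero
        exact (hasSum_apply b ξ).unique h0
      rw [this]
      simp [suppCard_eq_zero.mpr rfl]
    · have : suppCard ξ = ⊤ := by
        rw [suppCard, Set.encard_eq_top_iff]
        exact hfin
      rw [this, ENat.mul_top hN]
      exact le_top

end SuppExp

namespace SuppExp

open scoped ComplexConjugate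

local notation "adj" => ContinuousLinearMap.adjoint (𝕜 := ℂ) (E := l2N) (F := l2N)

lemma entry_adjoint (b : l2N →L[ℂ] l2N) (n m : ℕ) :
    entry (adj b) n m = conj (entry b m n) := by
  rw [entry_eq, entry_eq, ← inner_en, ← inner_en]
  rw [ContinuousLinearMap.adjoint_inner_right]
  rw [← inner_conj_symm]

lemma adjoint_adjoint' (b : l2N →L[ℂ] l2N) : adj (adj b) = b :=
  ContinuousLinearMap.adjoint_adjoint b

/-- columns of a `B_s` element have at most `s 1` entries -/
lemma suppCard_col {s : ℕ∞ → ℕ∞} {b : l2N →L[ℂ] l2N} (hb : b ∈ BsetD s) (m : ℕ) :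
    suppCard (b (en m)) ≤ s 1 := by
  have := (hb (en m)).1
  rwa [suppCard_en] at this

lemma suppCard_col_adj {s : ℕ∞ → ℕ∞} {b : l2N →L[ℂ] l2N} (hb : b ∈ BsetD s) (m : ℕ) :
    suppCard ((adj b) (en m)) ≤ s 1 := by
  have := (hb (en m)).2
  rwa [suppCard_en] at this

lemma col_set_eq (b : l2N →L[ℂ] l2N) (m : ℕ) :
    {n : ℕ | entry b n m ≠ 0} = Function.support (⇑(b (en m))) := rfl

lemma row_set_eq (b : l2N →L[ℂ] l2N) (m : ℕ) :
    {n : ℕ | entry b m n ≠ 0} = Function.support (⇑((adj b) (en m))) := by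
  ext n
  simp only [Set.mem_setOf_eq, Function.mem_support]
  rw [← entry_eq, entry_adjoint]
  simp

/-- zero is in every `BsetD` -/
lemma zero_mem_BsetD (s : ℕ∞ → ℕ∞) : (0 : l2N →L[ℂ] l2N) ∈ BsetD s := by
  intro ξ
  rw [map_zero]
  simp only [ContinuousLinearMap.zero_apply]
  constructor <;> · rw [suppCard_eq_zero.mpr rfl]; exact zero_le

/-- if `s 1 = 0` then `BsetD s = {0}` -/
lemma BsetD_subset_zero {s : ℕ∞ → ℕ∞} (hs : s 1 = 0) : BsetD s ⊆ {0} := by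
  intro b hb
  have hcol : ∀ m, b (en m) = 0 := by
    intro m
    have := suppCard_col hb m
    rw [hs] at this
    rw [← suppCard_eq_zero]
    exact le_antisymm this zero_le
  have : ∀ ξ, b ξ = 0 := by
    intro ξ
    refine (hasSum_apply b ξ).unique ?_
    have : (fun m : ℕ => ξ m • b (en m)) = fun _ => (0 : l2N) := by
      funext m; rw [hcol m, smul_zero]
    rw [this]; exact hasSum_zero
  ext ξ
  simp [this ξ]

/-- if `s 1 = ⊤` and `s` is monotone then `BsetD s` is everything -/
lemma BsetD_eq_univ {s : ℕ∞ → ℕ∞} (hmono : Monotone s) (hs : s 1 = ⊤) :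
    BsetD s = Set.univ := by
  refine Set.eq_univ_of_forall (fun b ξ => ?_)
  by_cases hξ : ξ = 0
  · subst hξ
    rw [map_zero, map_zero]
    constructor <;> · rw [suppCard_eq_zero.mpr rfl]; exact zero_le
  · have : s (suppCard ξ) = ⊤ :=
      top_le_iff.mp (hs ▸ hmono (one_le_suppCard hξ))
    rw [this]
    exact ⟨le_top, le_top⟩

/-- B_s elements with finite `s 1` are RC finite -/
lemma BsetD_subset_RCFinite {s : ℕ∞ → ℕ∞} (hs : s 1 ≠ ⊤) :
    BsetD s ⊆ {a | RCFinite a} := by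
  intro b hb
  lift s 1 to ℕ using hs with N hN
  refine ⟨N, fun m => ⟨?_, ?_⟩⟩
  · rw [col_set_eq]
    exact hN ▸ suppCard_col hb m
  · rw [row_set_eq]
    exact hN ▸ suppCard_col_adj hb m

end SuppExp

namespace SuppExp

open scoped ComplexConjugate

local notation "adj" => ContinuousLinearMap.adjoint (𝕜 := ℂ) (E := l2N) (F := l2N)

lemma enat_eq_top_of_forall {x : ℕ∞} (h : ∀ k : ℕ, (k : ℕ∞) ≤ x) : x = ⊤ := by
  by_contra hx
  lift x to ℕ using hx with n
  have := h (n + 1)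
  exact absurd (Nat.cast_le.mp this) (by omega)

/-- an `RCFinite` operator lies in `BsetD ((N+1) * s)` whenever `s` dominates the identity -/
lemma RCFinite_mem_BsetD {a : l2N →L[ℂ] l2N} {N : ℕ}
    (hcolN : ∀ m, {n : ℕ | entry a n m ≠ 0}.encard ≤ (N : ℕ∞))
    (hrowN : ∀ m, {n : ℕ | entry a m n ≠ 0}.encard ≤ (N : ℕ∞))
    {s : ℕ∞ → ℕ∞} (hmono : Monotone s) (hid : ∀ k : ℕ, (k : ℕ∞) ≤ s k) :
    a ∈ BsetD (fun n => ((N : ℕ∞) + 1) * s n) := by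
  have hstop : s ⊤ = ⊤ := by
    apply enat_eq_top_of_forall
    intro k
    exact (hid k).trans (hmono le_top)
  have hids : ∀ x : ℕ∞, x ≤ s x := by
    intro x
    induction x using ENat.recTopCoe with
    | top => rw [hstop]
    | coe k => exact hid k
  have key : ∀ (b : l2N →L[ℂ] l2N), (∀ m, suppCard (b (en m)) ≤ (N : ℕ∞)) →
      ∀ ξ, suppCard (b ξ) ≤ ((N : ℕ∞) + 1) * s (suppCard ξ) := by
    intro b hcol ξ
    calc suppCard (b ξ) ≤ (N : ℕ∞) * suppCard ξ := suppCard_apply_le b _ hcol ξ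
      _ ≤ ((N : ℕ∞) + 1) * s (suppCard ξ) :=
        mul_le_mul' (le_add_of_nonneg_right zero_le) (hids _)
  intro ξ
  constructor
  · refine key a ?_ ξ
    intro m
    rw [suppCard, ← col_set_eq]
    exact hcolN m
  · refine key (adj a) ?_ ξ
    intro m
    have : Function.support (⇑((adj a) (en m))) = {n : ℕ | entry a m n ≠ 0} :=
      (row_set_eq a m).symm
    rw [suppCard]
    rw [this]
    exact hrowN m

section Sfam

variable {S : Set (ℕ∞ → ℕ∞)}

/-- scaled copies of members stay in `S` -/
lemma scaled_mem (hadd : ∀ s ∈ S, ∀ t ∈ S, (fun n => s n + t n) ∈ S)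
    {s : ℕ∞ → ℕ∞} (hs : s ∈ S) (k : ℕ) :
    (fun n => ((k : ℕ∞) + 1) * s n) ∈ S := by
  induction k with
  | zero =>
    have : (fun n => (((0:ℕ) : ℕ∞) + 1) * s n) = s := by
      funext n
      rw [Nat.cast_zero, zero_add, one_mul]
    rw [this]; exact hs
  | succ k ih =>
    have : (fun n => (((k+1:ℕ) : ℕ∞) + 1) * s n)
        = fun n => (((k:ℕ) : ℕ∞) + 1) * s n + s n := by
      funext n
      push_cast
      ring
    rw [this]
    exact hadd _ ih _ hs

end Sfam

end SuppExp

namespace SuppExp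

open scoped ComplexConjugate
open Polynomial

local notation "adj" => ContinuousLinearMap.adjoint (𝕜 := ℂ) (E := l2N) (F := l2N)

/-- generic coefficients making all "matched row" sums nonzero -/
lemma exists_good_coeffs (A : ℕ → ℕ → ℂ) (M : Finset (ℕ × ℕ))
    (hinj : ∀ p ∈ M, ∀ q ∈ M, p ≠ q → p.1 ≠ q.1 ∧ p.2 ≠ q.2)
    (hnz : ∀ p ∈ M, A p.1 p.2 ≠ 0) :
    ∃ c : ℕ → ℂ, ∀ p ∈ M, (∑ q ∈ M, c q.2 * A p.1 q.2) ≠ 0 := by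
  classical
  set Q : ℕ × ℕ → ℂ[X] := fun p => ∑ q ∈ M, Polynomial.C (A p.1 q.2) * X ^ q.2 with hQdef
  have hQne : ∀ p ∈ M, Q p ≠ 0 := by
    intro p hp
    have hcoeff : (Q p).coeff p.2 = A p.1 p.2 := by
      rw [hQdef]
      simp only [Polynomial.finset_sum_coeff, Polynomial.coeff_C_mul, Polynomial.coeff_X_pow]
      rw [Finset.sum_eq_single p]
      · simp
      · intro q hq hqp
        have hq2 : q.2 ≠ p.2 := (hinj q hq p hp hqp).2
        rw [if_neg (fun h => hq2 h.symm), mul_zero]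
      · intro hpM; exact absurd hp hpM
    intro h0
    rw [h0, Polynomial.coeff_zero] at hcoeff
    exact hnz p hp hcoeff.symm
  have hbad : (⋃ p ∈ M, {x : ℂ | (Q p).IsRoot x}).Finite :=
    Set.Finite.biUnion M.finite_toSet (fun p hp => Polynomial.finite_setOf_isRoot (hQne p hp))
  obtain ⟨x, hx⟩ := hbad.infinite_compl.nonempty
  refine ⟨fun m => x ^ m, fun p hp => ?_⟩
  have hxp : ¬ (Q p).IsRoot x := by
    intro hroot
    exact hx (Set.mem_biUnion hp hroot)
  intro h0
  apply hxp
  rw [Polynomial.IsRoot, hQdef]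
  rw [Polynomial.eval_finset_sum]
  simp only [Polynomial.eval_mul, Polynomial.eval_C, Polynomial.eval_pow, Polynomial.eval_X]
  rw [← h0]
  exact Finset.sum_congr rfl (fun q _ => mul_comm _ _)

/-- a matching in the pattern of `b ∈ B_s` has size at most `s` of itself -/
lemma matching_card_le {s : ℕ∞ → ℕ∞} {b : l2N →L[ℂ] l2N} (hb : b ∈ BsetD s)
    (hmono : Monotone s) (M : Finset (ℕ × ℕ))
    (hinj : ∀ p ∈ M, ∀ q ∈ M, p ≠ q → p.1 ≠ q.1 ∧ p.2 ≠ q.2)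
    (hnz : ∀ p ∈ M, entry b p.1 p.2 ≠ 0) :
    (M.card : ℕ∞) ≤ s (M.card) := by
  classical
  obtain ⟨c, hc⟩ := exists_good_coeffs (fun n m => entry b n m) M hinj hnz
  set ξ : l2N := ∑ q ∈ M, c q.2 • en q.2 with hξdef
  have hbξ : b ξ = ∑ q ∈ M, c q.2 • b (en q.2) := by
    rw [hξdef, map_sum]
    simp
  -- support of ξ is contained in the snd-image of M
  have hsupp : Function.support (⇑ξ) ⊆ ↑(M.image Prod.snd) := by
    intro n hn
    rw [Function.mem_support] at hn
    rw [hξdef] at hn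
    rw [lp.coeFn_sum, Finset.sum_apply] at hn
    obtain ⟨q, hq, hne⟩ := Finset.exists_ne_zero_of_sum_ne_zero hn
    simp only [Finset.coe_image, Set.mem_image, Finset.mem_coe]
    refine ⟨q, hq, ?_⟩
    by_contra hnq
    apply hne
    have : n ≠ q.2 := fun h => hnq h.symm
    rw [lp.coeFn_smul, Pi.smul_apply, en_apply_ne this, smul_zero]
  have hcard2 : (M.image Prod.snd).card = M.card :=
    Finset.card_image_of_injOn (fun p hp q hq hpq => by
      by_contra hne
      exact (hinj p hp q hq hne).2 hpq)
  have h1 : suppCard ξ ≤ (M.card : ℕ∞) := by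
    rw [suppCard]
    calc (Function.support (⇑ξ)).encard ≤ (↑(M.image Prod.snd) : Set ℕ).encard :=
          Set.encard_mono hsupp
      _ = ((M.image Prod.snd).card : ℕ∞) := Set.encard_coe_eq_coe_finsetCard _
      _ = (M.card : ℕ∞) := by rw [hcard2]
  -- the fst-image of M is inside the support of b ξ
  have h2 : (↑(M.image Prod.fst) : Set ℕ) ⊆ Function.support (⇑(b ξ)) := by
    intro n hn
    simp only [Finset.coe_image, Set.mem_image, Finset.mem_coe] at hn
    obtain ⟨p, hp, rfl⟩ := hn
    rw [Function.mem_support]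
    have : (b ξ) p.1 = ∑ q ∈ M, c q.2 * entry b p.1 q.2 := by
      rw [hbξ, lp.coeFn_sum, Finset.sum_apply]
      refine Finset.sum_congr rfl (fun q _ => ?_)
      rw [lp.coeFn_smul, Pi.smul_apply, smul_eq_mul, entry_eq]
    rw [this]
    exact hc p hp
  have hcard1 : (M.image Prod.fst).card = M.card :=
    Finset.card_image_of_injOn (fun p hp q hq hpq => by
      by_contra hne
      exact (hinj p hp q hq hne).1 hpq)
  calc (M.card : ℕ∞) = ((M.image Prod.fst).card : ℕ∞) := by rw [hcard1]
    _ = (↑(M.image Prod.fst) : Set ℕ).encard := (Set.encard_coe_eq_coe_finsetCard _).symm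
    _ ≤ suppCard (b ξ) := Set.encard_mono h2
    _ ≤ s (suppCard ξ) := (hb ξ).1
    _ ≤ s (M.card) := hmono h1

end SuppExp

namespace SuppExp

open scoped ComplexConjugate

local notation "adj" => ContinuousLinearMap.adjoint (𝕜 := ℂ) (E := l2N) (F := l2N)

/-- if `s k₀ < k₀` then the pattern of `b ∈ B_s` is finite -/
lemma pattern_finite {s : ℕ∞ → ℕ∞} {b : l2N →L[ℂ] l2N} (hb : b ∈ BsetD s)
    (hmono : Monotone s) (hs1 : s 1 ≠ ⊤) {k₀ : ℕ} (hk : s k₀ < (k₀ : ℕ∞)) :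
    {p : ℕ × ℕ | entry b p.1 p.2 ≠ 0}.Finite := by
  classical
  set P : Set (ℕ × ℕ) := {p : ℕ × ℕ | entry b p.1 p.2 ≠ 0} with hPdef
  set IsM : Finset (ℕ × ℕ) → Prop := fun M =>
    (∀ p ∈ M, entry b p.1 p.2 ≠ 0) ∧
    (∀ p ∈ M, ∀ q ∈ M, p ≠ q → p.1 ≠ q.1 ∧ p.2 ≠ q.2) with hIsM
  -- all matchings are smaller than k₀
  have hsmall : ∀ M, IsM M → M.card < k₀ := by
    intro M hM
    by_contra hcard
    push_neg at hcard
    obtain ⟨M', hM'sub, hM'card⟩ := Finset.exists_subset_card_eq hcard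
    have h := matching_card_le hb hmono M'
      (fun p hp q hq hpq => hM.2 p (hM'sub hp) q (hM'sub hq) hpq)
      (fun p hp => hM.1 p (hM'sub hp))
    rw [hM'card] at h
    exact absurd (h.trans_lt hk) (lt_irrefl _)
  -- a maximum matching
  set d : ℕ := Nat.findGreatest (fun k => ∃ M, IsM M ∧ M.card = k) k₀ with hd
  have hdle : ∀ M, IsM M → M.card ≤ d := by
    intro M hM
    exact Nat.le_findGreatest (le_of_lt (hsmall M hM)) ⟨M, hM, rfl⟩
  obtain ⟨M₀, hM₀, hM₀card⟩ : ∃ M, IsM M ∧ M.card = d := by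
    have h0 : ∃ M, IsM M ∧ M.card = 0 := ⟨∅, ⟨by simp, by simp⟩, by simp⟩
    have := Nat.findGreatest_spec (m := 0) (P := fun k => ∃ M, IsM M ∧ M.card = k)
      (Nat.zero_le k₀) h0
    rwa [← hd] at this
  -- every pattern point shares a coordinate with M₀
  have hcover : ∀ p ∈ P, ∃ q ∈ M₀, p.1 = q.1 ∨ p.2 = q.2 := by
    intro p hp
    by_contra hno
    push_neg at hno
    have hpnot : p ∉ M₀ := fun hmem => by
      have := hno p hmem
      exact this.1 rfl
    have hM' : IsM (insert p M₀) := by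
      constructor
      · intro q hq
        rcases Finset.mem_insert.mp hq with rfl | hq'
        · exact hp
        · exact hM₀.1 q hq'
      · intro x hx y hy hxy
        rcases Finset.mem_insert.mp hx with rfl | hx' <;>
          rcases Finset.mem_insert.mp hy with rfl | hy'
        · exact absurd rfl hxy
        · exact ⟨fun h => (hno y hy').1 h, fun h => (hno y hy').2 h⟩
        · exact ⟨fun h => (hno x hx').1 h.symm, fun h => (hno x hx').2 h.symm⟩
        · exact hM₀.2 x hx' y hy' hxy
    have := hdle _ hM'
    rw [Finset.card_insert_of_notMem hpnot, hM₀card] at this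
    omega
  -- rows and columns are finite
  have hrowfin : ∀ n : ℕ, {m : ℕ | entry b n m ≠ 0}.Finite := by
    intro n
    rw [← Set.encard_lt_top_iff]
    calc {m : ℕ | entry b n m ≠ 0}.encard ≤ s 1 := by
          rw [row_set_eq]
          exact suppCard_col_adj hb n
      _ < ⊤ := lt_top_iff_ne_top.mpr hs1
  have hcolfin : ∀ m : ℕ, {n : ℕ | entry b n m ≠ 0}.Finite := by
    intro m
    rw [← Set.encard_lt_top_iff]
    calc {n : ℕ | entry b n m ≠ 0}.encard ≤ s 1 := by
          rw [col_set_eq]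
          exact suppCard_col hb m
      _ < ⊤ := lt_top_iff_ne_top.mpr hs1
  -- conclude
  have hsub : P ⊆ ⋃ q ∈ M₀, ({q.1} ×ˢ {m : ℕ | entry b q.1 m ≠ 0} ∪
      {n : ℕ | entry b n q.2 ≠ 0} ×ˢ {q.2}) := by
    intro p hp
    obtain ⟨q, hq, hor⟩ := hcover p hp
    refine Set.mem_biUnion hq ?_
    rcases hor with h1 | h2
    · left
      refine Set.mem_prod.mpr ⟨h1, ?_⟩
      simpa [← h1, hPdef] using hp
    · right
      refine Set.mem_prod.mpr ⟨?_, h2⟩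
      simpa [← h2, hPdef] using hp
  refine Set.Finite.subset ?_ hsub
  refine Set.Finite.biUnion M₀.finite_toSet (fun q _ => ?_)
  exact Set.Finite.union
    (Set.Finite.prod (Set.finite_singleton _) (hrowfin q.1))
    (Set.Finite.prod (hcolfin q.2) (Set.finite_singleton _))

/-- rank one operators are compact -/
lemma rankOne_compact (φ : l2N →L[ℂ] ℂ) (v : l2N) :
    IsCompactOperator ⇑(φ.smulRight v) := by
  refine ⟨(fun c : ℂ => c • v) '' Metric.closedBall 0 ‖φ‖, ?_, ?_⟩
  · exact ((isCompact_closedBall 0 ‖φ‖).image (by fun_prop))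
  · refine Filter.mem_of_superset (Metric.closedBall_mem_nhds 0 one_pos) ?_
    intro x hx
    simp only [Metric.mem_closedBall, dist_zero_right] at hx
    refine Set.mem_preimage.mpr ?_
    refine ⟨φ x, ?_, rfl⟩
    simp only [Metric.mem_closedBall, dist_zero_right]
    calc ‖φ x‖ ≤ ‖φ‖ * ‖x‖ := φ.le_opNorm x
      _ ≤ ‖φ‖ * 1 := by
          exact mul_le_mul_of_nonneg_left hx (norm_nonneg φ)
      _ = ‖φ‖ := mul_one _

/-- finite sums of rank one operators are compact -/
lemma finsum_rankOne_compact (G : Finset ℕ) (v : ℕ → l2N) :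
    IsCompactOperator ⇑(∑ m ∈ G, ((innerSL ℂ (en m)).smulRight (v m))) := by
  classical
  induction G using Finset.induction_on with
  | empty =>
    simp only [Finset.sum_empty]
    have : ⇑(0 : l2N →L[ℂ] l2N) = fun _ => (0 : l2N) := rfl
    rw [this]
    exact isCompactOperator_zero
  | insert a F hx ih =>
    rw [Finset.sum_insert hx]
    have : ⇑(((innerSL ℂ (en a)).smulRight (v a)) + ∑ m ∈ F, ((innerSL ℂ (en m)).smulRight (v m)))
        = ⇑((innerSL ℂ (en a)).smulRight (v a)) + ⇑(∑ m ∈ F, ((innerSL ℂ (en m)).smulRight (v m))) := rfl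
    rw [this]
    exact (rankOne_compact _ _).add ih

/-- an operator whose pattern is finite is compact -/
lemma compact_of_pattern_finite {b : l2N →L[ℂ] l2N}
    (hfin : {p : ℕ × ℕ | entry b p.1 p.2 ≠ 0}.Finite) :
    IsCompactOperator ⇑b := by
  classical
  set G : Finset ℕ := hfin.toFinset.image Prod.snd with hG
  have hcol0 : ∀ m ∉ G, b (en m) = 0 := by
    intro m hm
    apply lp.ext
    funext n
    rw [lp.coeFn_zero]
    by_contra hne
    apply hm
    rw [hG]
    refine Finset.mem_image.mpr ⟨(n, m), ?_, rfl⟩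
    rw [Set.Finite.mem_toFinset]
    exact hne
  have hsum : ∀ ξ, b ξ = ∑ m ∈ G, ξ m • b (en m) := by
    intro ξ
    refine ((hasSum_sum_of_ne_finset_zero ?_).unique (hasSum_apply b ξ)).symm
    intro m hm
    rw [hcol0 m hm, smul_zero]
  have : ⇑b = ⇑(∑ m ∈ G, ((innerSL ℂ (en m)).smulRight (b (en m)))) := by
    funext ξ
    rw [hsum ξ]
    rw [ContinuousLinearMap.sum_apply]
    refine Finset.sum_congr rfl (fun m _ => ?_)
    rw [ContinuousLinearMap.smulRight_apply, innerSL_apply_apply, inner_en]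
  rw [this]
  exact finsum_rankOne_compact G _

end SuppExp

namespace SuppExp

open scoped ComplexConjugate ENNReal NNReal
open Metric

local notation "adj" => ContinuousLinearMap.adjoint (𝕜 := ℂ) (E := l2N) (F := l2N)

/-- truncation to the first `k` coordinates -/
def Qk (k : ℕ) : l2N →L[ℂ] l2N :=
  ∑ m ∈ Finset.range k, (innerSL ℂ (en m)).smulRight (en m)

lemma Qk_apply_coord (k : ℕ) (ξ : l2N) (n : ℕ) :
    (Qk k ξ) n = if n < k then ξ n else 0 := by
  rw [Qk, ContinuousLinearMap.sum_apply, lp.coeFn_sum, Finset.sum_apply]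
  have hterm : ∀ m, (((innerSL ℂ (en m)).smulRight (en m)) ξ) n
      = if n = m then ξ n else 0 := by
    intro m
    rw [ContinuousLinearMap.smulRight_apply, innerSL_apply_apply, inner_en, lp.coeFn_smul,
      Pi.smul_apply]
    by_cases h : n = m
    · subst h
      rw [if_pos rfl, en_apply_self, smul_eq_mul, mul_one]
    · rw [if_neg h, en_apply_ne h, smul_zero]
  rw [Finset.sum_congr rfl (fun m _ => hterm m)]
  simp [Finset.sum_ite_eq, Finset.mem_range]

lemma Qk_eq_single_sum (k : ℕ) (ξ : l2N) :
    Qk k ξ = ∑ m ∈ Finset.range k, lp.single 2 m (ξ m) := by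
  apply lp.ext
  funext n
  rw [lp.coeFn_sum, Finset.sum_apply]
  have h1 : (Qk k ξ) n = if n < k then ξ n else 0 := Qk_apply_coord k ξ n
  rw [h1]
  have : ∀ m, (lp.single 2 m (ξ m) : l2N) n = if n = m then ξ n else 0 := by
    intro m
    by_cases h : n = m
    · subst h; rw [lp.single_apply_self, if_pos rfl]
    · rw [lp.single_apply_ne 2 m _ h, if_neg h]
  rw [Finset.sum_congr rfl (fun m _ => this m)]
  simp [Finset.sum_ite_eq, Finset.mem_range]

lemma pow_cancel {x y : ℝ} (hx : 0 ≤ x) (hy : 0 ≤ y)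
    (h : x ^ (2 : ℝ≥0∞).toReal ≤ y ^ (2 : ℝ≥0∞).toReal) : x ≤ y := by
  have h2 : (2 : ℝ≥0∞).toReal = ((2:ℕ) : ℝ) := by norm_num
  rw [h2, Real.rpow_natCast, Real.rpow_natCast] at h
  exact (pow_le_pow_iff_left₀ hx hy (by norm_num)).mp h

lemma sum_sq_le (ξ : l2N) (F : Finset ℕ) :
    ∑ i ∈ F, ‖ξ i‖ ^ (2 : ℝ≥0∞).toReal ≤ ‖ξ‖ ^ (2 : ℝ≥0∞).toReal := by
  have hp : (0:ℝ) < (2 : ℝ≥0∞).toReal := by norm_num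
  have h := lp.hasSum_norm hp ξ
  exact sum_le_hasSum F (fun i _ => Real.rpow_nonneg (norm_nonneg _) _) h

lemma norm_sub_Qk_le (k : ℕ) (ξ : l2N) : ‖ξ - Qk k ξ‖ ≤ ‖ξ‖ := by
  have hp : (0:ℝ) < (2 : ℝ≥0∞).toReal := by norm_num
  refine pow_cancel (norm_nonneg _) (norm_nonneg _) ?_
  rw [Qk_eq_single_sum, lp.norm_compl_sum_single hp ξ (Finset.range k)]
  have := sum_sq_le ξ (Finset.range k)
  linarith [Finset.sum_nonneg (fun (i:ℕ) (_ : i ∈ Finset.range k) =>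
    Real.rpow_nonneg (norm_nonneg (ξ i)) (2 : ℝ≥0∞).toReal)]

lemma norm_Qk_apply_le (k : ℕ) (ξ : l2N) : ‖Qk k ξ‖ ≤ ‖ξ‖ := by
  have hp : (0:ℝ) < (2 : ℝ≥0∞).toReal := by norm_num
  refine pow_cancel (norm_nonneg _) (norm_nonneg _) ?_
  rw [Qk_eq_single_sum]
  rw [lp.norm_sum_single hp (⇑ξ) (Finset.range k)]
  exact sum_sq_le ξ (Finset.range k)

lemma tendsto_norm_sub_Qk (ξ : l2N) :
    Filter.Tendsto (fun k => ‖ξ - Qk k ξ‖) Filter.atTop (nhds 0) := by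
  have hp : (0:ℝ) < (2 : ℝ≥0∞).toReal := by norm_num
  have hsq : Filter.Tendsto (fun k => ‖ξ - Qk k ξ‖ ^ (2 : ℝ≥0∞).toReal)
      Filter.atTop (nhds 0) := by
    have heq : ∀ k, ‖ξ - Qk k ξ‖ ^ (2 : ℝ≥0∞).toReal
        = ‖ξ‖ ^ (2 : ℝ≥0∞).toReal - ∑ i ∈ Finset.range k, ‖ξ i‖ ^ (2 : ℝ≥0∞).toReal := by
      intro k
      rw [Qk_eq_single_sum, lp.norm_compl_sum_single hp ξ (Finset.range k)]
    rw [funext heq]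
    have h := (lp.hasSum_norm hp ξ).tendsto_sum_nat
    have := h.const_sub (‖ξ‖ ^ (2 : ℝ≥0∞).toReal)
    simpa using this
  have h2 : (2 : ℝ≥0∞).toReal = ((2:ℕ) : ℝ) := by norm_num
  have hsq' : Filter.Tendsto (fun k => ‖ξ - Qk k ξ‖ ^ (2:ℕ)) Filter.atTop (nhds 0) := by
    have : ∀ k, ‖ξ - Qk k ξ‖ ^ (2 : ℝ≥0∞).toReal = ‖ξ - Qk k ξ‖ ^ (2:ℕ) := by
      intro k; rw [h2, Real.rpow_natCast]
    rwa [funext this] at hsq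
  have := hsq'.sqrt
  rw [Real.sqrt_zero] at this
  have heq2 : ∀ k, Real.sqrt (‖ξ - Qk k ξ‖ ^ (2:ℕ)) = ‖ξ - Qk k ξ‖ := by
    intro k
    rw [pow_two, Real.sqrt_mul_self (norm_nonneg _)]
  rwa [funext heq2] at this

lemma Qk_selfAdjoint (k : ℕ) : adj (Qk k) = Qk k := by
  symm
  refine (ContinuousLinearMap.eq_adjoint_iff _ _).mpr (fun x y => ?_)
  rw [lp.inner_eq_tsum, lp.inner_eq_tsum]
  refine tsum_congr (fun n => ?_)
  rw [Qk_apply_coord, Qk_apply_coord]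
  by_cases h : n < k
  · rw [if_pos h, if_pos h]
  · rw [if_neg h, if_neg h]
    simp [RCLike.inner_apply]

lemma norm_Qk_comp_le (T : l2N →L[ℂ] l2N) : ‖Qk k ∘L T‖ ≤ ‖T‖ := by
  refine ContinuousLinearMap.opNorm_le_bound _ (norm_nonneg T) (fun ξ => ?_)
  calc ‖(Qk k ∘L T) ξ‖ = ‖Qk k (T ξ)‖ := rfl
    _ ≤ ‖T ξ‖ := norm_Qk_apply_le k (T ξ)
    _ ≤ ‖T‖ * ‖ξ‖ := T.le_opNorm ξ

lemma norm_sub_Qk_comp_le (T : l2N →L[ℂ] l2N) :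
    ‖T - Qk k ∘L T‖ ≤ ‖T‖ := by
  refine ContinuousLinearMap.opNorm_le_bound _ (norm_nonneg T) (fun ξ => ?_)
  calc ‖(T - Qk k ∘L T) ξ‖ = ‖T ξ - Qk k (T ξ)‖ := rfl
    _ ≤ ‖T ξ‖ := norm_sub_Qk_le k (T ξ)
    _ ≤ ‖T‖ * ‖ξ‖ := T.le_opNorm ξ

/-- key approximation: a compact operator is left-approximated by truncations -/
lemma compact_approx {c : l2N →L[ℂ] l2N} (hc : IsCompactOperator ⇑c)
    {ε : ℝ} (hε : 0 < ε) : ∃ K : ℕ, ∀ k ≥ K, ‖c - Qk k ∘L c‖ ≤ ε := by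
  obtain ⟨Kc, hKc, himg⟩ :=
    hc.image_closedBall_subset_compact (𝕜₁ := ℂ) (f := (c : l2N →ₗ[ℂ] l2N)) 1
  obtain ⟨t, htfin, htcov⟩ := totallyBounded_iff.mp hKc.totallyBounded (ε/2) (by linarith)
  have hev : ∀ᶠ k in Filter.atTop, ∀ y ∈ t, ‖y - Qk k y‖ < ε/2 := by
    rw [htfin.eventually_all]
    intro y _
    exact (tendsto_norm_sub_Qk y).eventually_lt_const (by linarith)
  obtain ⟨K, hK⟩ := Filter.eventually_atTop.mp hev
  refine ⟨K, fun k hk => ?_⟩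
  have hball : ∀ ξ : l2N, ‖ξ‖ ≤ 1 → ‖c ξ - Qk k (c ξ)‖ ≤ ε := by
    intro ξ hξ
    have hmem : c ξ ∈ Kc := himg ⟨ξ, by simpa [Metric.mem_closedBall, dist_zero_right] using hξ, rfl⟩
    obtain ⟨y, hyt, hy⟩ := Set.mem_iUnion₂.mp (htcov hmem)
    rw [Metric.mem_ball, dist_eq_norm] at hy
    have hdecomp : c ξ - Qk k (c ξ)
        = ((c ξ - y) - Qk k (c ξ - y)) + (y - Qk k y) := by
      rw [map_sub]
      abel
    calc ‖c ξ - Qk k (c ξ)‖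
        ≤ ‖(c ξ - y) - Qk k (c ξ - y)‖ + ‖y - Qk k y‖ := by
          rw [hdecomp]; exact norm_add_le _ _
      _ ≤ ‖c ξ - y‖ + ‖y - Qk k y‖ := by
          gcongr
          exact norm_sub_Qk_le k _
      _ ≤ ε/2 + ε/2 := by
          have := hK k hk y hyt
          gcongr <;> linarith
      _ = ε := by ring
  refine ContinuousLinearMap.opNorm_le_bound _ hε.le (fun ξ => ?_)
  by_cases hξ0 : ξ = 0
  · subst hξ0; simp
  · have hn : 0 < ‖ξ‖ := norm_pos_iff.mpr hξ0
    set u : l2N := ((‖ξ‖⁻¹ : ℝ) : ℂ) • ξ with hu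
    have hun : ‖u‖ ≤ 1 := by
      rw [hu, norm_smul]
      simp only [Complex.norm_real, norm_inv, norm_norm]
      rw [inv_mul_cancel₀ hn.ne']
    have hrec : ξ = ((‖ξ‖ : ℝ) : ℂ) • u := by
      rw [hu, ← smul_assoc, smul_eq_mul, ← Complex.ofReal_mul, mul_inv_cancel₀ hn.ne']
      simp
    have hle := hball u hun
    calc ‖(c - Qk k ∘L c) ξ‖ = ‖((‖ξ‖ : ℝ) : ℂ) • ((c - Qk k ∘L c) u)‖ := by
          rw [← map_smul, ← hrec]
      _ = ‖ξ‖ * ‖(c - Qk k ∘L c) u‖ := by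
          rw [norm_smul]
          simp
      _ = ‖ξ‖ * ‖c u - Qk k (c u)‖ := rfl
      _ ≤ ‖ξ‖ * ε := by gcongr
      _ = ε * ‖ξ‖ := mul_comm _ _

end SuppExp

namespace SuppExp

open scoped ComplexConjugate ENNReal
open Metric

local notation "adj" => ContinuousLinearMap.adjoint (𝕜 := ℂ) (E := l2N) (F := l2N)

lemma support_Qk_subset (k : ℕ) (η : l2N) :
    Function.support (⇑(Qk k η)) ⊆ ↑(Finset.range k) := by
  intro n hn
  rw [Function.mem_support, Qk_apply_coord] at hn
  by_contra h
  rw [if_neg (fun hlt => h (Finset.mem_coe.mpr (Finset.mem_range.mpr hlt)))] at hn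
  exact hn rfl

lemma suppCard_Qk_le (k : ℕ) (η : l2N) : suppCard (Qk k η) ≤ (k : ℕ∞) := by
  rw [suppCard]
  calc (Function.support (⇑(Qk k η))).encard ≤ (↑(Finset.range k) : Set ℕ).encard :=
        Set.encard_mono (support_Qk_subset k η)
    _ = ((Finset.range k).card : ℕ∞) := Set.encard_coe_eq_coe_finsetCard _
    _ = (k : ℕ∞) := by rw [Finset.card_range]

/-- the truncated operator `Qk k ∘ b ∘ Qk k` lies in `BsetD ((k+1) * t)` for any
monotone `t` with `1 ≤ t 1`. -/
lemma QbQ_mem_BsetD (k : ℕ) (b : l2N →L[ℂ] l2N) {t : ℕ∞ → ℕ∞}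
    (hmono : Monotone t) (ht1 : 1 ≤ t 1) :
    (Qk k ∘L b ∘L Qk k) ∈ BsetD (fun n => ((k : ℕ∞) + 1) * t n) := by
  have hbound : ∀ (c : l2N →L[ℂ] l2N) (ξ : l2N),
      suppCard ((Qk k ∘L c ∘L Qk k) ξ) ≤ ((k : ℕ∞) + 1) * t (suppCard ξ) := by
    intro c ξ
    by_cases hξ : ξ = 0
    · subst hξ
      rw [map_zero]
      rw [suppCard_eq_zero.mpr rfl]
      exact zero_le
    · have h1 : suppCard ((Qk k ∘L c ∘L Qk k) ξ) ≤ (k : ℕ∞) := suppCard_Qk_le k _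
      have h2 : ((k : ℕ∞)) ≤ ((k : ℕ∞) + 1) * t (suppCard ξ) := by
        have ht : 1 ≤ t (suppCard ξ) := ht1.trans (hmono (one_le_suppCard hξ))
        calc (k : ℕ∞) ≤ (k : ℕ∞) + 1 := le_add_of_nonneg_right zero_le
          _ = ((k : ℕ∞) + 1) * 1 := (mul_one _).symm
          _ ≤ ((k : ℕ∞) + 1) * t (suppCard ξ) := mul_le_mul' le_rfl ht
      exact h1.trans h2
  intro ξ
  refine ⟨hbound b ξ, ?_⟩
  have hadj : adj (Qk k ∘L b ∘L Qk k) = Qk k ∘L (adj b) ∘L Qk k := by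
    rw [ContinuousLinearMap.adjoint_comp, ContinuousLinearMap.adjoint_comp,
      Qk_selfAdjoint]
    rfl
  rw [hadj]
  exact hbound (adj b) ξ

/-- norm bound via the C*-identity -/
lemma norm_comp_sub_Qk_le (b : l2N →L[ℂ] l2N) (k : ℕ) {e : ℝ} (he : 0 ≤ e)
    (h : ‖(adj b ∘L b) - Qk k ∘L (adj b ∘L b)‖ ≤ e * e) :
    ‖b - b ∘L Qk k‖ ≤ e := by
  set D : l2N →L[ℂ] l2N := ContinuousLinearMap.id ℂ l2N - Qk k with hD
  have hDnorm : ∀ ξ, ‖D ξ‖ ≤ ‖ξ‖ := by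
    intro ξ
    rw [hD]
    exact norm_sub_Qk_le k ξ
  have hDop : ‖D‖ ≤ 1 := ContinuousLinearMap.opNorm_le_bound _ zero_le_one
    (fun ξ => by rw [one_mul]; exact hDnorm ξ)
  have hbD : b - b ∘L Qk k = b ∘L D := by
    rw [hD, ContinuousLinearMap.comp_sub]
    simp
  have hadjD : adj D = D := by
    rw [hD, map_sub, ContinuousLinearMap.adjoint_id, Qk_selfAdjoint]
  have hcstar : ‖b ∘L D‖ * ‖b ∘L D‖ = ‖adj (b ∘L D) ∘L (b ∘L D)‖ :=
    (ContinuousLinearMap.norm_adjoint_comp_self _).symm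
  have hDA : D ∘L (adj b ∘L b) = (adj b ∘L b) - Qk k ∘L (adj b ∘L b) := by
    rw [hD, ContinuousLinearMap.sub_comp]
    simp
  have hrw : adj (b ∘L D) ∘L (b ∘L D) = (D ∘L (adj b ∘L b)) ∘L D := by
    rw [ContinuousLinearMap.adjoint_comp, hadjD]
    ext ξ
    simp [ContinuousLinearMap.comp_apply]
  have hnormsq : ‖b ∘L D‖ * ‖b ∘L D‖ ≤ e * e := by
    rw [hcstar, hrw]
    calc ‖(D ∘L (adj b ∘L b)) ∘L D‖
        ≤ ‖D ∘L (adj b ∘L b)‖ * ‖D‖ := ContinuousLinearMap.opNorm_comp_le _ _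
      _ ≤ (e * e) * 1 := by
          refine mul_le_mul ?_ hDop (norm_nonneg _) (by positivity)
          rw [hDA]
          exact h
      _ = e * e := mul_one _
  rw [hbD]
  nlinarith [norm_nonneg (b ∘L D), hnormsq, he]

/-- a compact operator is in the closure of the union of the `BsetD`s,
provided `S` contains an element `t` with `t 1 ≥ 1`. -/
lemma compact_mem_closure {S : Set (ℕ∞ → ℕ∞)}
    (hmonoS : ∀ s ∈ S, Monotone s)
    (hadd : ∀ s ∈ S, ∀ t ∈ S, (fun n => s n + t n) ∈ S)
    {t : ℕ∞ → ℕ∞} (htS : t ∈ S) (ht1 : 1 ≤ t 1)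
    {b : l2N →L[ℂ] l2N} (hb : IsCompactOperator ⇑b) :
    b ∈ closure (⋃ s ∈ S, BsetD s) := by
  rw [Metric.mem_closure_iff]
  intro ε hε
  have hε3 : 0 < ε/3 := by linarith
  obtain ⟨K1, hK1⟩ := compact_approx hb hε3
  have hbb : IsCompactOperator ⇑(adj b ∘L b) := by
    have := hb.continuous_comp (adj b).continuous
    exact this
  have hε9 : 0 < (ε/3) * (ε/3) := by positivity
  obtain ⟨K2, hK2⟩ := compact_approx hbb hε9
  set k := max K1 K2 with hk
  set a := Qk k ∘L b ∘L Qk k with ha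
  have haU : a ∈ ⋃ s ∈ S, BsetD s := by
    refine Set.mem_biUnion (scaled_mem hadd htS k) ?_
    exact QbQ_mem_BsetD k b (hmonoS t htS) ht1
  refine ⟨a, haU, ?_⟩
  rw [dist_eq_norm]
  have hsplit : b - a = (b - Qk k ∘L b) + (Qk k ∘L (b - b ∘L Qk k)) := by
    rw [ha]
    ext ξ
    simp [ContinuousLinearMap.comp_apply, map_sub]
  have h1 : ‖b - Qk k ∘L b‖ ≤ ε/3 := hK1 k (le_max_left _ _)
  have h2 : ‖b - b ∘L Qk k‖ ≤ ε/3 :=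
    norm_comp_sub_Qk_le b k hε3.le (hK2 k (le_max_right _ _))
  have h3 : ‖Qk k ∘L (b - b ∘L Qk k)‖ ≤ ε/3 := (norm_Qk_comp_le _).trans h2
  calc ‖b - a‖ ≤ ‖b - Qk k ∘L b‖ + ‖Qk k ∘L (b - b ∘L Qk k)‖ := by
        rw [hsplit]; exact norm_add_le _ _
    _ ≤ ε/3 + ε/3 := add_le_add h1 h3
    _ < ε := by linarith

end SuppExp


open SuppExp in
set_option synthInstance.maxHeartbeats 1000000 in
set_option maxHeartbeats 1000000 in
/-- Every discrete support expansion C*-algebra is one of `{0}`, `K(ℓ²)`, `C_RC`, `B(ℓ²)`. -/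
theorem discrete_support_expansion_classification (S : Set (ℕ∞ → ℕ∞)) (hne : S.Nonempty)
    (hmono : ∀ s ∈ S, Monotone s)
    (hadd : ∀ s ∈ S, ∀ t ∈ S, (fun n => s n + t n) ∈ S)
    (hcomp : ∀ s ∈ S, ∀ t ∈ S, s ∘ t ∈ S) :
    closure (⋃ s ∈ S, BsetD s) = {0} ∨
    closure (⋃ s ∈ S, BsetD s) = {a : l2N →L[ℂ] l2N | IsCompactOperator a} ∨
    closure (⋃ s ∈ S, BsetD s) = C_RC ∨
    closure (⋃ s ∈ S, BsetD s) = Set.univ := by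
  classical
  set U : Set (l2N →L[ℂ] l2N) := ⋃ s ∈ S, BsetD s with hU
  by_cases hA : ∀ s ∈ S, s 1 = 0
  · -- the zero algebra
    left
    have hU0 : U = {0} := by
      apply subset_antisymm
      · intro b hb
        obtain ⟨s, hs, hbs⟩ := Set.mem_iUnion₂.mp hb
        exact BsetD_subset_zero (hA s hs) hbs
      · intro b hb
        rw [Set.mem_singleton_iff] at hb
        subst hb
        obtain ⟨s, hs⟩ := hne
        exact Set.mem_biUnion hs (zero_mem_BsetD s)
    rw [hU0, closure_singleton]
  · push_neg at hA
    obtain ⟨t₁, ht₁S, ht₁⟩ := hA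
    have ht11 : 1 ≤ t₁ 1 := ENat.one_le_iff_ne_zero.mpr ht₁
    by_cases hD : ∃ s ∈ S, ∃ k : ℕ, s (k : ℕ∞) = ⊤
    · -- all bounded operators
      right; right; right
      obtain ⟨s, hsS, k, hsk⟩ := hD
      set T : ℕ∞ → ℕ∞ := fun n => ((k : ℕ∞) + 1) * t₁ n with hT
      have hTS : T ∈ S := scaled_mem hadd ht₁S k
      have hTk : (k : ℕ∞) ≤ T 1 := by
        rw [hT]
        calc (k : ℕ∞) ≤ (k : ℕ∞) + 1 := le_add_of_nonneg_right zero_le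
          _ = ((k : ℕ∞) + 1) * 1 := (mul_one _).symm
          _ ≤ ((k : ℕ∞) + 1) * t₁ 1 := mul_le_mul' le_rfl ht11
      have huS : (s ∘ T) ∈ S := hcomp s hsS T hTS
      have hu1 : (s ∘ T) 1 = ⊤ := by
        have : s (k : ℕ∞) ≤ s (T 1) := hmono s hsS hTk
        rw [hsk] at this
        exact top_le_iff.mp this
      have : BsetD (s ∘ T) = Set.univ :=
        BsetD_eq_univ (hmono _ huS) hu1
      apply Set.eq_univ_of_univ_subset
      calc Set.univ = BsetD (s ∘ T) := this.symm
        _ ⊆ U := Set.subset_biUnion_of_mem huS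
        _ ⊆ closure U := subset_closure
    · push_neg at hD
      by_cases hC : ∃ s ∈ S, ∀ k : ℕ, (k : ℕ∞) ≤ s (k : ℕ∞)
      · -- the C_RC algebra
        right; right; left
        obtain ⟨s, hsS, hid⟩ := hC
        apply subset_antisymm
        · have hsub : U ⊆ {a | RCFinite a} := by
            intro b hb
            obtain ⟨s', hs', hbs'⟩ := Set.mem_iUnion₂.mp hb
            exact BsetD_subset_RCFinite (hD s' hs' 1) hbs'
          calc closure U ⊆ closure {a | RCFinite a} := closure_mono hsub
            _ = C_RC := rfl
        · have hsub : {a | RCFinite a} ⊆ U := by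
            intro a ha
            obtain ⟨N, hN⟩ := ha
            refine Set.mem_biUnion (scaled_mem hadd hsS N) ?_
            exact RCFinite_mem_BsetD (fun m => (hN m).1) (fun m => (hN m).2)
              (hmono s hsS) hid
          calc C_RC = closure {a | RCFinite a} := rfl
            _ ⊆ closure U := closure_mono hsub
      · -- the compact operators
        right; left
        push_neg at hC
        apply subset_antisymm
        · refine closure_minimal ?_ isClosed_setOf_isCompactOperator
          intro b hb
          obtain ⟨s', hs', hbs'⟩ := Set.mem_iUnion₂.mp hb
          obtain ⟨k, hk⟩ := hC s' hs'
          exact compact_of_pattern_finite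
            (pattern_finite hbs' (hmono s' hs') (hD s' hs' 1) hk)
        · intro b hb
          exact compact_mem_closure hmono hadd ht₁S ht11 hb
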